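/- The minimum number of edges f(n) of a link-irregular graph on n vertices satisfies f(n) = Ω(n·√(log n)); that is, there exist constants c > 0 and N such that every link-irregular graph on n ≥ N vertices has at least c·n·√(log n) edges. -/

import Mathlib

open SimpleGraph Finset

/-- The link of a vertex `v`: the subgraph induced by the neighborhood of `v`. -/
def SimpleGraph.link {V : Type*} (G : SimpleGraph V) (v : V) :
    SimpleGraph (G.neighborSet v) :=
  G.induce (G.neighborSet v)

/-- A graph is link-irregular if the links of any two distinct vertices are
non-isomorphic. -/
def SimpleGraph.LinkIrregular {V : Type*} (G : SimpleGraph V) : Prop :=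
  ∀ u v : V, u ≠ v → ¬ Nonempty (G.link u ≃g G.link v)

lemma card_sg (d : ℕ) : Fintype.card (SimpleGraph (Fin d)) ≤ 2 ^ (d * d) := by
  classical
  have h : Function.Injective (fun (G : SimpleGraph (Fin d)) (i j : Fin d) =>
      decide (G.Adj i j)) := by
    intro G H hGH
    ext i j
    have := congrFun (congrFun hGH i) j
    simpa using this
  calc Fintype.card (SimpleGraph (Fin d)) ≤ Fintype.card (Fin d → Fin d → Bool) :=
        Fintype.card_le_of_injective _ h
    _ = 2 ^ (d * d) := by simp [Fintype.card_fun, pow_mul]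

lemma card_deg_eq_le {n : ℕ} (G : SimpleGraph (Fin n)) (hd : DecidableRel G.Adj)
    (h : G.LinkIrregular) (d : ℕ) :
    (univ.filter (fun v => G.degree v = d)).card ≤ 2 ^ (d * d) := by
  classical
  set F : Fin n → SimpleGraph (Fin d) := fun v =>
    if hv : Fintype.card (G.neighborSet v) = d then
      (G.link v).comap (Fintype.equivFinOfCardEq hv).symm.toEmbedding
    else ⊥ with hF
  have hinj : Set.InjOn F (univ.filter (fun v => G.degree v = d)) := by
    intro u hu v hv huv
    by_contra hne
    apply h u v hne
    simp only [mem_coe, mem_filter] at hu hv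
    have hcu : Fintype.card (G.neighborSet u) = d := by
      rw [G.card_neighborSet_eq_degree]; exact hu.2
    have hcv : Fintype.card (G.neighborSet v) = d := by
      rw [G.card_neighborSet_eq_degree]; exact hv.2
    have e1 : F u ≃g G.link u := by
      rw [hF]; simp only [hcu, dif_pos]
      exact SimpleGraph.Iso.comap _ _
    have e2 : F v ≃g G.link v := by
      rw [hF]; simp only [hcv, dif_pos]
      exact SimpleGraph.Iso.comap _ _
    exact ⟨e1.symm.trans (huv ▸ e2)⟩
  calc (univ.filter (fun v => G.degree v = d)).card
      ≤ (univ : Finset (SimpleGraph (Fin d))).card :=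
        Finset.card_le_card_of_injOn F (fun _ _ => mem_univ _) hinj
    _ ≤ 2 ^ (d * d) := by rw [Finset.card_univ]; exact card_sg d

lemma sumbound (D : ℕ) (hD : 1 ≤ D) : ∑ d ∈ range D, 2 ^ (d * d) ≤ 2 ^ (D * D) := by
  obtain ⟨k, rfl⟩ : ∃ k, D = k + 1 := ⟨D - 1, (Nat.succ_pred_eq_of_pos hD).symm⟩
  calc ∑ d ∈ range (k+1), 2 ^ (d * d)
      ≤ ∑ _d ∈ range (k+1), 2 ^ (k * k) := by
        refine Finset.sum_le_sum fun d hd => Nat.pow_le_pow_right (by norm_num) ?_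
        have : d ≤ k := Nat.lt_succ_iff.mp (Finset.mem_range.mp hd)
        exact Nat.mul_le_mul this this
    _ = (k+1) * 2 ^ (k * k) := by rw [Finset.sum_const, Finset.card_range, smul_eq_mul]
    _ ≤ 2 ^ (k+1) * 2 ^ (k * k) := by
        exact Nat.mul_le_mul_right _ (Nat.le_of_lt Nat.lt_two_pow_self)
    _ = 2 ^ ((k+1) + k * k) := (pow_add 2 _ _).symm
    _ ≤ 2 ^ ((k+1) * (k+1)) := Nat.pow_le_pow_right (by norm_num) (by nlinarith)

lemma lowcount {n : ℕ} (G : SimpleGraph (Fin n)) (hd : DecidableRel G.Adj)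
    (h : G.LinkIrregular) (D : ℕ) (hD : 1 ≤ D) :
    (univ.filter (fun v => G.degree v < D)).card ≤ 2 ^ (D * D) := by
  classical
  have := Finset.card_eq_sum_card_fiberwise
    (f := fun v => G.degree v) (s := univ.filter (fun v => G.degree v < D))
    (t := range D) (fun v hv => by
      simp only [mem_coe, mem_filter] at hv; exact Finset.mem_range.mpr hv.2)
  rw [this]
  calc ∑ d ∈ range D, ((univ.filter (fun v => G.degree v < D)).filter
        (fun v => G.degree v = d)).card
      ≤ ∑ d ∈ range D, 2 ^ (d * d) := by
        refine Finset.sum_le_sum fun d _ => ?_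
        refine le_trans (Finset.card_le_card ?_) (card_deg_eq_le G hd h d)
        intro v hv
        simp only [mem_filter] at hv ⊢
        exact ⟨mem_univ v, hv.2⟩
    _ ≤ 2 ^ (D * D) := sumbound D hD

set_option maxHeartbeats 1000000 in
/-- The minimum number of edges of a link-irregular graph on `n` vertices is
`Ω(n·√(log n))`. -/
theorem linkIrregular_edges_omega :
    ∃ c : ℝ, 0 < c ∧ ∃ N : ℕ, ∀ n : ℕ, N ≤ n →
      ∀ (G : SimpleGraph (Fin n)) (_ : DecidableRel G.Adj), G.LinkIrregular →
        c * n * Real.sqrt (Real.log n) ≤ (G.edgeFinset.card : ℝ) := by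
  refine ⟨1/32, by norm_num, 2^25, ?_⟩
  intro n hn G hdec hG
  set L := Nat.log 2 n with hLdef
  set m := L / 2 with hmdef
  set D := Nat.sqrt m with hDdef
  have hn0 : 0 < n := lt_of_lt_of_le (by norm_num) hn
  have hL25 : 25 ≤ L := (Nat.le_log_iff_pow_le (b := 2) (by norm_num) hn0.ne').mpr hn
  have hm12 : 12 ≤ m := by omega
  have hD1 : 1 ≤ D := Nat.sqrt_pos.mpr (by omega)
  have hDD : D * D ≤ L - 1 := by
    have h1 : m ≤ L - 1 := by omega
    exact le_trans (Nat.sqrt_le m) h1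
  have hpowL : 2 ^ L ≤ n := Nat.pow_log_le_self 2 hn0.ne'
  have hpow : 2 ^ (L - 1) ≤ n / 2 := by
    rw [Nat.le_div_iff_mul_le (by norm_num)]
    calc 2 ^ (L-1) * 2 = 2 ^ L := by rw [← pow_succ]; congr 1; omega
      _ ≤ n := hpowL
  have hlow : (univ.filter (fun v => G.degree v < D)).card ≤ n / 2 :=
    le_trans (lowcount G hdec hG D hD1)
      (le_trans (Nat.pow_le_pow_right (by norm_num) hDD) hpow)
  -- high-degree vertices
  have hsplit : (univ.filter (fun v => G.degree v < D)).card
      + (univ.filter (fun v => ¬ G.degree v < D)).card = n := by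
    rw [Finset.card_filter_add_card_filter_not]
    simp
  set H := univ.filter (fun v => ¬ G.degree v < D) with hHdef
  have hsum : H.card * D ≤ ∑ v, G.degree v := by
    calc H.card * D = ∑ _v ∈ H, D := by rw [Finset.sum_const, smul_eq_mul]
      _ ≤ ∑ v ∈ H, G.degree v := by
          refine Finset.sum_le_sum fun v hv => ?_
          simp only [hHdef, mem_filter] at hv
          omega
      _ ≤ ∑ v, G.degree v := Finset.sum_le_sum_of_subset (Finset.filter_subset _ _)
  have hedge : ∑ v, G.degree v = 2 * G.edgeFinset.card :=
    G.sum_degrees_eq_twice_card_edges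
  clear_value L m D
  -- pass to the reals
  set x := Real.log n with hxdef
  set s := Real.sqrt x with hsdef
  clear_value H
  clear hHdef
  rw [hxdef] at hsdef
  clear_value x
  clear_value s
  have hlog2 : (0.6931471803 : ℝ) < Real.log 2 := Real.log_two_gt_d9
  have hx16 : (16 : ℝ) ≤ x := by
    rw [hxdef]
    have h1 : ((2:ℝ))^(25:ℕ) ≤ (n:ℝ) := by exact_mod_cast hn
    have h2 : Real.log ((2:ℝ)^(25:ℕ)) ≤ Real.log (n:ℝ) := Real.log_le_log (by positivity) h1
    rw [Real.log_pow] at h2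
    push_cast at h2
    nlinarith
  have hx0 : (0:ℝ) ≤ x := by linarith
  have hs4 : (4:ℝ) ≤ s := by
    rw [hsdef, show (4:ℝ) = Real.sqrt 16 by
      rw [show (16:ℝ) = 4^2 by norm_num, Real.sqrt_sq]; norm_num]
    exact Real.sqrt_le_sqrt (hxdef ▸ hx16)
  have hs0 : (0:ℝ) ≤ s := hsdef ▸ Real.sqrt_nonneg _
  have hLx : x - 1 ≤ (L:ℝ) := by
    rw [hxdef]
    have h1 : (n:ℝ) < 2 ^ (L + 1) := by
      rw [hLdef]
      exact_mod_cast Nat.lt_pow_succ_log_self (b := 2) (by norm_num) n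
    have h2 : Real.log (n:ℝ) ≤ Real.log ((2:ℝ) ^ (L+1)) := Real.log_le_log (by exact_mod_cast hn0) h1.le
    rw [Real.log_pow] at h2
    have hlog2' : Real.log 2 ≤ 1 := by nlinarith [Real.log_le_sub_one_of_pos (by norm_num : (0:ℝ) < 2)]
    have : ((L:ℝ) + 1) * Real.log 2 ≤ (L:ℝ) + 1 := by
      have : (0:ℝ) ≤ (L:ℝ) + 1 := by positivity
      nlinarith
    push_cast at h2 ⊢
    nlinarith
  have hmx : x / 4 ≤ (m:ℝ) := by
    have h1 : L ≤ 2 * m + 1 := by omega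
    have h2 : (L:ℝ) ≤ 2 * (m:ℝ) + 1 := by exact_mod_cast h1
    linarith
  have hDx : s / 4 ≤ (D:ℝ) := by
    have h1 : m < (D + 1)^2 := by rw [hDdef]; exact Nat.lt_succ_sqrt' m
    have h2 : (m:ℝ) ≤ ((D:ℝ) + 1)^2 := by exact_mod_cast h1.le
    have h3 : Real.sqrt m ≤ (D:ℝ) + 1 := by
      calc Real.sqrt m ≤ Real.sqrt (((D:ℝ)+1)^2) := Real.sqrt_le_sqrt h2
        _ = (D:ℝ) + 1 := Real.sqrt_sq (by positivity)
    have h4 : s / 2 ≤ Real.sqrt m := by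
      rw [Real.le_sqrt (by positivity) (by positivity)]
      have hss : s ^ 2 = x := by rw [hsdef, hxdef]; exact Real.sq_sqrt (hxdef ▸ hx0)
      nlinarith
    linarith
  -- counting the high-degree vertices, in the reals
  have hHn : (n:ℝ) / 2 ≤ (H.card : ℝ) := by
    have h1 : n / 2 + H.card ≥ n := by omega
    have h2 : ((n/2 : ℕ):ℝ) + (H.card:ℝ) ≥ (n:ℝ) := by exact_mod_cast h1
    have h3 : ((n/2 : ℕ):ℝ) ≤ (n:ℝ)/2 := Nat.cast_div_le
    linarith
  have hfinal : ((n:ℝ)/2) * (s/4) ≤ 2 * (G.edgeFinset.card : ℝ) := by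
    have h1 : (H.card : ℝ) * (D:ℝ) ≤ 2 * (G.edgeFinset.card : ℝ) := by
      have h0 : H.card * D ≤ 2 * G.edgeFinset.card := hedge ▸ hsum
      exact_mod_cast h0
    have h2 : ((n:ℝ)/2) * (s/4) ≤ (H.card : ℝ) * (D:ℝ) := by
      have hn0' : (0:ℝ) ≤ (n:ℝ)/2 := by positivity
      have hs0' : (0:ℝ) ≤ s/4 := by positivity
      exact mul_le_mul hHn hDx hs0' (by positivity)
    linarith
  have h5 : ((n:ℝ)/2) * (s/4) = (n:ℝ) * s / 8 := by ring
  rw [h5] at hfinal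
  linarith
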